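/- arXiv:2509.19655 — 2 statements merged into one kernel-verified Lean document; each statement's English description precedes it below -/
import Mathlib

section
/- Let G be a 2-vertex-connected simple graph and let e = uv be an edge of G such that {u, v} is a 2-vertex cut of G (an irrelevant edge). Then there exists a minimum-size 2-edge-connected spanning subgraph of G that does not contain e. -/
variable {V : Type*}

/-- Reachability between vertices using only edges from the edge set `F`. -/
def ReachE (F : Set (Sym2 V)) (a b : V) : Prop :=
  Relation.ReflTransGen (fun x y => s(x, y) ∈ F) a b

/-- `H` is (the edge set of) a 2-edge-connected spanning subgraph: it connects all
vertices and it keeps doing so after removing any single edge (i.e. it is connected,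
spanning and bridgeless). -/
def TwoECSS (H : Set (Sym2 V)) : Prop :=
  (∀ a b : V, ReachE H a b) ∧ ∀ e ∈ H, ∀ a b : V, ReachE (H \ {e}) a b

lemma reachE_refl {F : Set (Sym2 V)} {a : V} : ReachE F a a := Relation.ReflTransGen.refl
lemma reachE_symm {F : Set (Sym2 V)} {a b : V} (h : ReachE F a b) : ReachE F b a :=
  (@Relation.ReflTransGen.symmetric _ _ ⟨fun x y (hxy : s(x,y) ∈ F) => by
    show s(y,x) ∈ F; rwa [Sym2.eq_swap]⟩).symm _ _ h
lemma reachE_trans {F : Set (Sym2 V)} {a b c : V} (h : ReachE F a b) (h' : ReachE F b c) :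
    ReachE F a c := Relation.ReflTransGen.trans h h'
lemma reachE_mono {F F' : Set (Sym2 V)} (hFF' : F ⊆ F') {a b : V} (h : ReachE F a b) :
    ReachE F' a b := Relation.ReflTransGen.mono (fun _ _ hx => hFF' hx) _ _ h
lemma reachE_single {F : Set (Sym2 V)} {a b : V} (h : s(a,b) ∈ F) : ReachE F a b :=
  Relation.ReflTransGen.single h
lemma reachE_mem {F : Set (Sym2 V)} {T : Set V}
    (hT : ∀ f ∈ F, ∀ w ∈ f, w ∈ T) {y z : V} (h : ReachE F y z) (hz : z ∈ T) : y ∈ T := by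
  rcases Relation.ReflTransGen.cases_head h with rfl | ⟨c, hc, -⟩
  · exact hz
  · exact hT _ hc y (by simp [Sym2.mem_iff])


lemma reachE_patch {F₁ K : Set (Sym2 V)} {u v : V}
    (h1 : ∀ a b : V, ReachE F₁ a b)
    (hsub : F₁ \ {s(u,v)} ⊆ K)
    (huv : ReachE K u v) :
    ∀ a b : V, ReachE K a b := by
  intro a b
  have h := h1 a b
  induction h with
  | refl => exact reachE_refl
  | tail hstep hedge ih =>
    rename_i c d
    by_cases hce : s(c, d) = s(u, v)
    · rcases Sym2.eq_iff.1 hce with ⟨rfl, rfl⟩ | ⟨rfl, rfl⟩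
      · exact reachE_trans ih huv
      · exact reachE_trans ih (reachE_symm huv)
    · exact Relation.ReflTransGen.tail ih (hsub ⟨hedge, hce⟩)

/-- edges of `F` lying inside the vertex set `W`, other than `e`. -/
def sideE (F : Set (Sym2 V)) (e : Sym2 V) (W : Set V) : Set (Sym2 V) :=
  {f | f ∈ F ∧ f ≠ e ∧ ∀ w ∈ f, w ∈ W}

lemma sideE_subset {F : Set (Sym2 V)} {e : Sym2 V} {W : Set V} :
    sideE F e W ⊆ F := fun _ hf => hf.1

/-- an edge of a simple graph inside both `S ∪ {u,v}` and `T ∪ {u,v}` (S, T disjoint)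
is the edge s(u,v). -/
lemma eq_of_both_sides {G : SimpleGraph V} {u v : V} {S T : Set V} {f : Sym2 V}
    (hd : ∀ z, z ∈ S → z ∈ T → False)
    (hf : f ∈ G.edgeSet)
    (hS : ∀ w ∈ f, w ∈ S ∪ {u, v}) (hT : ∀ w ∈ f, w ∈ T ∪ {u, v}) : f = s(u, v) := by
  induction f using Sym2.ind with
  | _ x y =>
    have hadj : G.Adj x y := hf
    have hmem : ∀ w ∈ s(x,y), w ∈ ({u, v} : Set V) := by
      intro w hw
      rcases hS w hw with h | h
      · rcases hT w hw with h' | h' <;> [exact absurd h' (hd w h); exact h']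
      · exact h
    have hx := hmem x (by simp)
    have hy := hmem y (by simp)
    have hxy := hadj.ne
    simp only [Set.mem_insert_iff, Set.mem_singleton_iff] at hx hy
    rcases hx with rfl | rfl <;> rcases hy with rfl | rfl <;> simp_all [Sym2.eq_iff]

/-- Every vertex of `S` that reaches `u` in `F`, reaches `u` or `v` using only
`S`-side edges of `F`. -/
lemma side_reach {F : Set (Sym2 V)} {u v : V} {S T : Set V}
    (hd : ∀ z, z ∈ S → z ∈ T → False)
    (hSu : u ∉ S) (hSv : v ∉ S)
    (hSd : ∀ z, z ∈ S → z ∈ T ∪ {u, v} → False)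
    (hclass : ∀ f ∈ F, f ≠ s(u,v) →
      (∀ w ∈ f, w ∈ S ∪ {u, v}) ∨ (∀ w ∈ f, w ∈ T ∪ {u, v}))
    {x : V} (hreach : ReachE F x u) (hx : x ∈ S) :
    ReachE (sideE F s(u,v) (S ∪ {u, v})) x u ∨ ReachE (sideE F s(u,v) (S ∪ {u, v})) x v := by
  induction hreach using Relation.ReflTransGen.head_induction_on with
  | refl => exact absurd hx hSu
  | @head z c hedge hrest ih =>
    have hne : s(z, c) ≠ s(u, v) := by
      intro h
      rcases Sym2.eq_iff.1 h with ⟨rfl, rfl⟩ | ⟨rfl, rfl⟩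
      · exact hSu hx
      · exact hSv hx
    have hSide : ∀ w ∈ s(z,c), w ∈ S ∪ {u, v} := by
      rcases hclass _ hedge hne with h | h
      · exact h
      · exact absurd (h z (by simp)) (fun hz => hSd z hx hz)
    have hfH : s(z,c) ∈ sideE F s(u,v) (S ∪ {u, v}) := ⟨hedge, hne, hSide⟩
    have hc : c ∈ S ∪ {u, v} := hSide c (by simp)
    rcases hc with hc | hc
    · rcases ih hc with h | h
      · exact Or.inl (Relation.ReflTransGen.head hfH h)
      · exact Or.inr (Relation.ReflTransGen.head hfH h)
    · rcases hc with rfl | rfl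
      · exact Or.inl (reachE_single hfH)
      · exact Or.inr (reachE_single hfH)

/-- A `u`–`v` connection in `F \ {s(u,v)}` yields one lying entirely on one side. -/
lemma side_decomp {F : Set (Sym2 V)} {u v : V} {S T : Set V}
    (hd : ∀ z, z ∈ S → z ∈ T → False)
    (hclass : ∀ f ∈ F, f ≠ s(u,v) →
      (∀ w ∈ f, w ∈ S ∪ {u, v}) ∨ (∀ w ∈ f, w ∈ T ∪ {u, v}))
    (h : ReachE (F \ {s(u,v)}) u v) :
    ReachE (sideE F s(u,v) (S ∪ {u, v})) u v ∨ ReachE (sideE F s(u,v) (T ∪ {u, v})) u v := by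
  set HS := sideE F s(u,v) (S ∪ {u, v}) with hHS
  set HT := sideE F s(u,v) (T ∪ {u, v}) with hHT
  suffices key : ∀ x : V, ReachE (F \ {s(u,v)}) x v →
      (ReachE HS x v ∨ ReachE HT x v) ∨ (ReachE HS u v ∨ ReachE HT u v) by
    rcases key u h with h' | h' <;> exact h'
  intro x hx
  induction hx using Relation.ReflTransGen.head_induction_on with
  | refl => exact Or.inl (Or.inl reachE_refl)
  | @head z c hedge hrest ih =>
    rcases ih with ih | ih
    swap
    · exact Or.inr ih
    obtain ⟨hzF, hzne⟩ := hedge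
    have hzne : s(z, c) ≠ s(u, v) := hzne
    have hmemS : ∀ {W : Set V}, (∀ w ∈ s(z,c), w ∈ W ∪ {u,v}) →
        s(z,c) ∈ sideE F s(u,v) (W ∪ {u,v}) := fun hw => ⟨hzF, hzne, hw⟩
    have endmem : ∀ {W : Set V}, ReachE (sideE F s(u,v) (W ∪ {u,v})) c v →
        c ∈ W ∪ {u, v} := by
      intro W hr
      exact reachE_mem (fun f hf => hf.2.2) hr (by simp)
    rcases hclass _ hzF hzne with hside | hside
    · rcases ih with ih | ih
      · exact Or.inl (Or.inl (Relation.ReflTransGen.head (hmemS hside) ih))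
      · have hcT : c ∈ T ∪ {u, v} := endmem ih
        have hcS : c ∈ S ∪ {u, v} := hside c (by simp)
        have hcuv : c ∈ ({u, v} : Set V) := by
          rcases hcS with h' | h'
          · rcases hcT with h'' | h''
            · exact absurd h'' (hd c h')
            · exact h''
          · exact h'
        rcases hcuv with rfl | rfl
        · exact Or.inr (Or.inr ih)
        · exact Or.inl (Or.inl (reachE_single (hmemS hside)))
    · rcases ih with ih | ih
      · have hcS : c ∈ S ∪ {u, v} := endmem ih
        have hcT : c ∈ T ∪ {u, v} := hside c (by simp)
        have hcuv : c ∈ ({u, v} : Set V) := by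
          rcases hcS with h' | h'
          · rcases hcT with h'' | h''
            · exact absurd h'' (hd c h')
            · exact h''
          · exact h'
        rcases hcuv with rfl | rfl
        · exact Or.inr (Or.inl ih)
        · exact Or.inl (Or.inr (reachE_single (hmemS hside)))
      · exact Or.inl (Or.inr (Relation.ReflTransGen.head (hmemS hside) ih))

/-- If `u` cannot reach `v` inside `H`, a walk in `G - u` from a vertex `H`-reachable
from `u` to `v` produces a crossing edge `g` with `ReachE (H ∪ {g}) u v`. -/
lemma exists_crossing {G : SimpleGraph V} {u v : V} {S : Set V} {H : Set (Sym2 V)}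
    (hSu : u ∉ S) (hSv : v ∉ S)
    (hclosed : ∀ z ∈ S, ∀ y : V, G.Adj z y → y ∈ S ∪ {u, v})
    (hC1 : ∀ y ∈ S, ReachE H y u ∨ ReachE H y v)
    (hnuv : ¬ ReachE H u v) :
    ∀ z, Relation.ReflTransGen (fun x y => G.Adj x y ∧ x ≠ u ∧ y ≠ u) z v →
      z ∈ S ∪ {v} → ReachE H u z →
      ∃ x y : V, G.Adj x y ∧ x ∈ S ∧ ReachE (H ∪ {s(x,y)}) u v := by
  intro z hz
  induction hz using Relation.ReflTransGen.head_induction_on with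
  | refl => intro _ hr; exact absurd hr hnuv
  | @head z c hadj hrest ih =>
    intro hzS hru
    have hzS' : z ∈ S := by
      rcases hzS with h | h
      · exact h
      · exact absurd (h ▸ hru) hnuv
    have hcS : c ∈ S ∪ {v} := by
      rcases hclosed z hzS' c hadj.1 with h | h
      · exact Or.inl h
      · rcases h with rfl | rfl
        · exact absurd rfl hadj.2.2
        · exact Or.inr rfl
    by_cases hrc : ReachE H u c
    · exact ih hcS hrc
    · refine ⟨z, c, hadj.1, hzS', ?_⟩
      have h1 : ReachE (H ∪ {s(z,c)}) u z := reachE_mono Set.subset_union_left hru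
      have h2 : ReachE (H ∪ {s(z,c)}) z c := reachE_single (by simp)
      have h3 : ReachE H c v := by
        rcases hcS with hc | hc
        · rcases hC1 c hc with h | h
          · exact absurd (reachE_symm h) hrc
          · exact h
        · exact hc ▸ reachE_refl
      exact reachE_trans (reachE_trans h1 h2) (reachE_mono Set.subset_union_left h3)


lemma edgeSet_twoECSS [Fintype V] (G : SimpleGraph V)
    (hcard : 3 ≤ Fintype.card V)
    (hconn : G.Connected)
    (hnocut : ∀ v a b : V, a ≠ v → b ≠ v →
      Relation.ReflTransGen (fun x y => G.Adj x y ∧ x ≠ v ∧ y ≠ v) a b) :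
    TwoECSS G.edgeSet := by
  classical
  constructor
  · intro a b
    exact Relation.ReflTransGen.mono (fun x y h => G.mem_edgeSet.2 h) _ _
      ((SimpleGraph.reachable_iff_reflTransGen a b).1 (hconn.preconnected a b))
  · intro e he a b
    induction e using Sym2.ind with
    | _ p q =>
    have hpq : G.Adj p q := he
    -- vertices ≠ p connect avoiding the edge
    have step1 : ∀ x y : V, x ≠ p → y ≠ p → ReachE (G.edgeSet \ {s(p,q)}) x y := by
      intro x y hx hy
      refine Relation.ReflTransGen.mono ?_ _ _ (hnocut p x y hx hy)
      rintro z w ⟨hzw, hz, hw⟩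
      refine ⟨G.mem_edgeSet.2 hzw, ?_⟩
      intro hcon
      rcases Sym2.eq_iff.1 hcon with ⟨rfl, rfl⟩ | ⟨rfl, rfl⟩
      · exact hz rfl
      · exact hw rfl
    -- p connects to some r ≠ p avoiding the edge
    obtain ⟨w, hwp, hwq⟩ : ∃ w : V, w ≠ p ∧ w ≠ q := by
      by_contra hcon
      push_neg at hcon
      have hsub : (Finset.univ : Finset V) ⊆ {p, q} := by
        intro w _
        simp only [Finset.mem_insert, Finset.mem_singleton]
        rcases eq_or_ne w p with h | h
        · exact Or.inl h
        · exact Or.inr (hcon w h)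
      have h2 := Finset.card_le_card hsub
      have h3 : ({p, q} : Finset V).card ≤ 2 :=
        (Finset.card_insert_le _ _).trans (by simp)
      rw [Finset.card_univ] at h2
      omega
    have hpw := hnocut q p w hpq.ne hwq
    obtain ⟨r, ⟨hpr, -, hrq⟩, -⟩ : ∃ r, (G.Adj p r ∧ p ≠ q ∧ r ≠ q) ∧ True := by
      rcases Relation.ReflTransGen.cases_head hpw with rfl | ⟨r, hr, -⟩
      · exact absurd rfl hwp.symm  -- p = w contradiction
      · exact ⟨r, hr, trivial⟩
    have hrp : r ≠ p := hpr.ne'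
    have hpr' : ReachE (G.edgeSet \ {s(p,q)}) p r := by
      refine reachE_single ⟨G.mem_edgeSet.2 hpr, ?_⟩
      intro hcon
      rcases Sym2.eq_iff.1 hcon with ⟨-, rfl⟩ | ⟨rfl, -⟩
      · exact hrq rfl
      · exact hpq.ne rfl
    -- combine
    rcases eq_or_ne a p with rfl | ha
    · rcases eq_or_ne b a with rfl | hb
      · exact reachE_refl
      · exact reachE_trans hpr' (step1 r b hrp hb)
    · rcases eq_or_ne b p with rfl | hb
      · exact reachE_trans (step1 a r ha hrp) (reachE_symm hpr')
      · exact step1 a b ha hb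

lemma main_swap [Fintype V] (G : SimpleGraph V) {u v b0 : V} {S T : Set V}
    (huv : G.Adj u v)
    (hnocut : ∀ v a b : V, a ≠ v → b ≠ v →
      Relation.ReflTransGen (fun x y => G.Adj x y ∧ x ≠ v ∧ y ≠ v) a b)
    (hd : ∀ z, z ∈ S → z ∈ T → False)
    (hSu : u ∉ S) (hSv : v ∉ S)
    (hb0 : b0 ∈ S)
    (hclosedS : ∀ z ∈ S, ∀ y : V, G.Adj z y → y ∈ S ∪ {u, v})
    (F : Set (Sym2 V)) (hFsub : F ⊆ G.edgeSet) (hF2 : TwoECSS F)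
    (hclass : ∀ f ∈ F, f ≠ s(u,v) →
      (∀ w ∈ f, w ∈ S ∪ {u, v}) ∨ (∀ w ∈ f, w ∈ T ∪ {u, v}))
    (he : s(u,v) ∈ F)
    (hnS : ¬ ReachE (sideE F s(u,v) (S ∪ {u, v})) u v)
    (hT : ReachE (sideE F s(u,v) (T ∪ {u, v})) u v) :
    ∃ F', F' ⊆ G.edgeSet ∧ TwoECSS F' ∧ F'.ncard ≤ F.ncard ∧ s(u,v) ∉ F' := by
  classical
  set e : Sym2 V := s(u,v) with hedef
  set HS := sideE F e (S ∪ {u, v}) with hHS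
  set HT := sideE F e (T ∪ {u, v}) with hHT
  have hSd : ∀ z, z ∈ S → z ∈ T ∪ {u, v} → False := by
    rintro z hz (h | rfl | rfl)
    · exact hd z hz h
    · exact hSu hz
    · exact hSv hz
  have hC1 : ∀ y ∈ S, ReachE HS y u ∨ ReachE HS y v := fun y hy =>
    side_reach hd hSu hSv hSd hclass (hF2.1 y u) hy
  -- obtain the crossing edge
  obtain ⟨x, y, hgadj, hxS, hguv⟩ :
      ∃ x y : V, G.Adj x y ∧ x ∈ S ∧ ReachE (HS ∪ {s(x,y)}) u v := by
    rcases hC1 b0 hb0 with hb | hb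
    · exact exists_crossing hSu hSv hclosedS hC1 hnS b0
        (hnocut u b0 v (fun hc => hSu (hc ▸ hb0)) huv.ne')
        (Or.inl hb0) (reachE_symm hb)
    · have hclosed' : ∀ z ∈ S, ∀ y : V, G.Adj z y → y ∈ S ∪ {v, u} := by
        intro z hz y hy
        rcases hclosedS z hz y hy with h | h | h
        · exact Or.inl h
        · exact Or.inr (Or.inr h)
        · exact Or.inr (Or.inl h)
      have hC1' : ∀ y ∈ S, ReachE HS y v ∨ ReachE HS y u := fun y hy => (hC1 y hy).symm
      have hnS' : ¬ ReachE HS v u := fun h => hnS (reachE_symm h)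
      obtain ⟨x, y, hgadj, hxS, hr⟩ := exists_crossing hSv hSu hclosed' hC1' hnS' b0
        (hnocut v b0 u (fun hc => hSv (hc ▸ hb0)) huv.ne)
        (Or.inl hb0) (reachE_symm hb)
      exact ⟨x, y, hgadj, hxS, reachE_symm hr⟩
  set g : Sym2 V := s(x,y) with hgdef
  have hgE : g ∈ G.edgeSet := hgadj
  have hgne : g ≠ e := by
    intro hc
    rcases Sym2.eq_iff.1 hc with ⟨rfl, -⟩ | ⟨rfl, -⟩
    · exact hSu hxS
    · exact hSv hxS
  set F' : Set (Sym2 V) := insert g (F \ {e}) with hF'def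
  have hFe_sub : F \ {e} ⊆ F' := Set.subset_insert _ _
  have hsubF' : F' ⊆ G.edgeSet := by
    rw [hF'def]
    exact Set.insert_subset hgE ((Set.diff_subset).trans hFsub)
  have hconn' : ∀ a b : V, ReachE F' a b := fun a b =>
    reachE_mono hFe_sub (hF2.2 e he a b)
  have hHS_subF' : ∀ {h : Sym2 V}, h ∈ F → h ≠ e →
      (∀ w ∈ h, w ∈ T ∪ {u, v}) → HS ∪ {g} ⊆ F' \ {h} := by
    intro h hhF hhe hhT f hf
    rcases hf with hf | hf
    · refine ⟨hFe_sub ⟨hf.1, hf.2.1⟩, ?_⟩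
      intro hc
      subst hc
      exact hhe (eq_of_both_sides hd (hFsub hhF) hf.2.2 hhT)
    · rcases hf with rfl
      refine ⟨Set.mem_insert _ _, ?_⟩
      intro hc
      subst hc
      exact hSd x hxS (hhT x (by rw [hgdef]; simp))
  have hbridgeless : ∀ h ∈ F', ∀ a b : V, ReachE (F' \ {h}) a b := by
    intro h hh a b
    by_cases hhF : h ∈ F \ {e}
    · have hhe : h ≠ e := hhF.2
      refine reachE_patch (u := u) (v := v) (hF2.2 h hhF.1) ?_ ?_ a b
      · rintro f ⟨⟨hfF, hfh⟩, hfe⟩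
        exact ⟨hFe_sub ⟨hfF, hfe⟩, hfh⟩
      · rcases hclass h hhF.1 hhe with hside | hside
        · -- h lies on the S side : use the T side connection
          refine reachE_mono ?_ hT
          intro f hf
          refine ⟨hFe_sub ⟨hf.1, hf.2.1⟩, ?_⟩
          intro hc
          subst hc
          exact hhe (eq_of_both_sides hd (hFsub hhF.1) hside hf.2.2)
        · -- h lies on the T side : use HS ∪ {g}
          exact reachE_mono (hHS_subF' hhF.1 hhe hside) hguv
    · refine reachE_mono ?_ (hF2.2 e he a b)
      intro f hf
      exact ⟨hFe_sub hf, fun hc => hhF (by rwa [Set.mem_singleton_iff.1 hc] at hf)⟩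
  have hFfin : F.Finite := Set.toFinite F
  have hcard : F'.ncard ≤ F.ncard := by
    have h1 : F'.ncard ≤ (F \ {e}).ncard + 1 := Set.ncard_insert_le _ _
    have h2 : (F \ {e}).ncard = F.ncard - 1 := Set.ncard_diff_singleton_of_mem he
    have h3 : 0 < F.ncard := (Set.ncard_pos hFfin).2 ⟨e, he⟩
    omega
  refine ⟨F', hsubF', ⟨hconn', hbridgeless⟩, hcard, ?_⟩
  rw [hF'def]
  rintro (hc | hc)
  · exact hgne hc.symm
  · exact hc.2 rfl

/-- Let `G` be a 2-vertex-connected simple graph and `e = uv` an edge of `G` such that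
`{u, v}` is a 2-vertex cut of `G` (an irrelevant edge).  Then there exists a
minimum-size 2-edge-connected spanning subgraph of `G` that does not contain `e`. -/
theorem exists_min_2ECSS_avoiding_irrelevant_edge [Fintype V] (G : SimpleGraph V)
    (hcard : 3 ≤ Fintype.card V)
    (hconn : G.Connected)
    (hnocut : ∀ v a b : V, a ≠ v → b ≠ v →
      Relation.ReflTransGen (fun x y => G.Adj x y ∧ x ≠ v ∧ y ≠ v) a b)
    (u v : V) (huv : G.Adj u v)
    (hirrelevant : ∃ a b : V, a ∉ ({u, v} : Set V) ∧ b ∉ ({u, v} : Set V) ∧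
      ¬ Relation.ReflTransGen
        (fun x y => G.Adj x y ∧ x ∉ ({u, v} : Set V) ∧ y ∉ ({u, v} : Set V)) a b) :
    ∃ F ⊆ G.edgeSet, TwoECSS F ∧
      (∀ F' ⊆ G.edgeSet, TwoECSS F' → F.ncard ≤ F'.ncard) ∧
      s(u, v) ∉ F := by
  classical
  obtain ⟨a0, b0, ha0, hb0, hnab⟩ := hirrelevant
  set Rel : V → V → Prop :=
    fun x y => G.Adj x y ∧ x ∉ ({u, v} : Set V) ∧ y ∉ ({u, v} : Set V) with hRel
  set A : Set V := {z | z ∉ ({u, v} : Set V) ∧ Relation.ReflTransGen Rel a0 z} with hA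
  set B : Set V := {z | z ∉ ({u, v} : Set V) ∧ ¬ Relation.ReflTransGen Rel a0 z} with hB
  have hdAB : ∀ z, z ∈ A → z ∈ B → False := fun z h h' => h'.2 h.2
  have hdBA : ∀ z, z ∈ B → z ∈ A → False := fun z h h' => h.2 h'.2
  have hAu : u ∉ A := fun h => h.1 (by simp)
  have hAv : v ∉ A := fun h => h.1 (by simp)
  have hBu : u ∉ B := fun h => h.1 (by simp)
  have hBv : v ∉ B := fun h => h.1 (by simp)
  have ha0A : a0 ∈ A := ⟨ha0, Relation.ReflTransGen.refl⟩
  have hb0B : b0 ∈ B := ⟨hb0, hnab⟩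
  have hclosedA : ∀ z ∈ A, ∀ y : V, G.Adj z y → y ∈ A ∪ {u, v} := by
    intro z hz y hy
    by_cases hyuv : y ∈ ({u, v} : Set V)
    · exact Or.inr hyuv
    · exact Or.inl ⟨hyuv, hz.2.tail ⟨hy, hz.1, hyuv⟩⟩
  have hclosedB : ∀ z ∈ B, ∀ y : V, G.Adj z y → y ∈ B ∪ {u, v} := by
    intro z hz y hy
    by_cases hyuv : y ∈ ({u, v} : Set V)
    · exact Or.inr hyuv
    · refine Or.inl ⟨hyuv, fun hcon => hz.2 (hcon.tail ⟨hy.symm, hyuv, hz.1⟩)⟩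
  have htot : ∀ z : V, z ∈ ({u, v} : Set V) ∨ z ∈ A ∨ z ∈ B := by
    intro z
    by_cases h1 : z ∈ ({u, v} : Set V)
    · exact Or.inl h1
    · by_cases h2 : Relation.ReflTransGen Rel a0 z
      · exact Or.inr (Or.inl ⟨h1, h2⟩)
      · exact Or.inr (Or.inr ⟨h1, h2⟩)
  have hclassE : ∀ f : Sym2 V, f ∈ G.edgeSet → f ≠ s(u, v) →
      (∀ w ∈ f, w ∈ A ∪ {u, v}) ∨ (∀ w ∈ f, w ∈ B ∪ {u, v}) := by
    intro f
    induction f using Sym2.ind with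
    | _ x y =>
      intro hf hne
      have hadj : G.Adj x y := hf
      have hmemxy : ∀ w ∈ s(x, y), w = x ∨ w = y := fun w hw => Sym2.mem_iff.1 hw
      have fromx : x ∈ A ∪ {u, v} → y ∈ A ∪ {u, v} →
          ((∀ w ∈ s(x, y), w ∈ A ∪ {u, v}) ∨ (∀ w ∈ s(x, y), w ∈ B ∪ {u, v})) := by
        intro hx hy
        refine Or.inl fun w hw => ?_
        rcases Sym2.mem_iff.1 hw with rfl | rfl <;> assumption
      have fromx' : x ∈ B ∪ {u, v} → y ∈ B ∪ {u, v} →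
          ((∀ w ∈ s(x, y), w ∈ A ∪ {u, v}) ∨ (∀ w ∈ s(x, y), w ∈ B ∪ {u, v})) := by
        intro hx hy
        refine Or.inr fun w hw => ?_
        rcases Sym2.mem_iff.1 hw with rfl | rfl <;> assumption
      rcases htot x with hx | hx | hx
      · rcases htot y with hy | hy | hy
        · -- both ends in {u,v} : the edge is s(u,v), contradiction
          exfalso
          apply hne
          rcases hx with rfl | rfl <;> rcases hy with rfl | rfl
          · exact absurd rfl hadj.ne
          · rfl
          · rw [Sym2.eq_swap]
          · exact absurd rfl hadj.ne
        · exact fromx (Or.inr hx) (Or.inl hy)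
        · exact fromx' (Or.inr hx) (Or.inl hy)
      · exact fromx (Or.inl hx) (hclosedA x hx y hadj)
      · exact fromx' (Or.inl hx) (hclosedB x hx y hadj)
  -- a minimum 2ECSS exists
  have hEtwo : TwoECSS G.edgeSet := edgeSet_twoECSS G hcard hconn hnocut
  have hex : ∃ n : ℕ, ∃ F : Set (Sym2 V), F ⊆ G.edgeSet ∧ TwoECSS F ∧ F.ncard = n :=
    ⟨G.edgeSet.ncard, G.edgeSet, subset_rfl, hEtwo, rfl⟩
  obtain ⟨F, hFsub, hF2, hFcard⟩ := Nat.find_spec hex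
  have hmin : ∀ F'' : Set (Sym2 V), F'' ⊆ G.edgeSet → TwoECSS F'' →
      F.ncard ≤ F''.ncard := by
    intro F'' h1 h2
    rw [hFcard]
    exact Nat.find_min' hex ⟨F'', h1, h2, rfl⟩
  by_cases heF : s(u, v) ∈ F
  swap
  · exact ⟨F, hFsub, hF2, fun F' h1 h2 => hmin F' h1 h2, heF⟩
  have hclassF : ∀ f ∈ F, f ≠ s(u, v) →
      (∀ w ∈ f, w ∈ A ∪ {u, v}) ∨ (∀ w ∈ f, w ∈ B ∪ {u, v}) :=
    fun f hf => hclassE f (hFsub hf)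
  have hdec := side_decomp hdAB hclassF (hF2.2 _ heF u v)
  set HA := sideE F s(u, v) (A ∪ {u, v}) with hHA
  set HB := sideE F s(u, v) (B ∪ {u, v}) with hHB
  by_cases hAc : ReachE HA u v <;> by_cases hBc : ReachE HB u v
  · -- both sides connect u to v : F \ {e} is already 2ECSS, contradicting minimality
    exfalso
    have htwo : TwoECSS (F \ {s(u, v)}) := by
      constructor
      · exact hF2.2 _ heF
      · intro h hh a b
        have hhe : h ≠ s(u, v) := hh.2
        refine reachE_patch (u := u) (v := v) (hF2.2 h hh.1) ?_ ?_ a b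
        · rintro f ⟨⟨hfF, hfh⟩, hfe⟩
          exact ⟨⟨hfF, hfe⟩, hfh⟩
        · rcases hclassF h hh.1 hhe with hside | hside
          · refine reachE_mono ?_ hBc
            intro f hf
            refine ⟨⟨hf.1, hf.2.1⟩, ?_⟩
            intro hc
            rw [Set.mem_singleton_iff] at hc
            subst hc
            exact hhe (eq_of_both_sides hdAB (hFsub hh.1) hside hf.2.2)
          · refine reachE_mono ?_ hAc
            intro f hf
            refine ⟨⟨hf.1, hf.2.1⟩, ?_⟩
            intro hc
            rw [Set.mem_singleton_iff] at hc
            subst hc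
            exact hhe (eq_of_both_sides hdAB (hFsub hh.1) hf.2.2 hside)
    have h1 := hmin _ (Set.diff_subset.trans hFsub) htwo
    have h2 : (F \ {s(u, v)}).ncard = F.ncard - 1 :=
      Set.ncard_diff_singleton_of_mem heF
    have h3 : 0 < F.ncard := (Set.ncard_pos (Set.toFinite F)).2 ⟨_, heF⟩
    omega
  · -- B side does not connect : swap inside B
    obtain ⟨F', h1, h2, h3, h4⟩ := main_swap G huv hnocut hdBA hBu hBv hb0B hclosedB F
      hFsub hF2 (fun f hf hne => (hclassF f hf hne).symm) heF hBc hAc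
    exact ⟨F', h1, h2, fun F'' hs ht => h3.trans (hmin F'' hs ht), h4⟩
  · -- A side does not connect : swap inside A
    obtain ⟨F', h1, h2, h3, h4⟩ := main_swap G huv hnocut hdAB hAu hAv ha0A hclosedA F
      hFsub hF2 hclassF heF hAc hBc
    exact ⟨F', h1, h2, fun F'' hs ht => h3.trans (hmin F'' hs ht), h4⟩
  · rcases hdec with h | h
    · exact absurd h hAc
    · exact absurd h hBc
end

section
/- Let G be a 2-edge-connected graph, H a 2-edge cover of G with a complex component C, and let G_C be the multigraph obtained from G by contracting each block of C and each other component of H to a single node. Let T_C be the tree in G_C induced by the bridges of C, and let P be a path in G_C avoiding the edges of T_C with two distinct endpoints u, v in T_C and all internal vertices outside T_C (a bridge-covering path). Then H' = H ∪ P is a 2-edge cover of G with strictly fewer bridges than H; specifically, every bridge of H on the u–v path in T_C is not a bridge of H', and every bridge of H' is a bridge of H. -/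
variable {V : Type*}

/-- The set of vertices incident to at least one edge of `F`. -/
def eSupport (F : Set (Sym2 V)) : Set V :=
  {v | ∃ e ∈ F, v ∈ e}

/-- The edge set `F` is connected (as a graph on its support). -/
def ConnSet (F : Set (Sym2 V)) : Prop :=
  ∀ a ∈ eSupport F, ∀ b ∈ eSupport F, ReachE F a b

/-- `C` is (the edge set of) a connected component of the edge set `F`. -/
def IsComponent (F C : Set (Sym2 V)) : Prop :=
  C.Nonempty ∧ C ⊆ F ∧ ConnSet C ∧
    ∀ e ∈ F, e ∉ C → ∀ v ∈ e, v ∉ eSupport C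

/-- `e` is a bridge of the edge set `F`: removing it disconnects its endpoints. -/
def IsBridge (F : Set (Sym2 V)) (e : Sym2 V) : Prop :=
  e ∈ F ∧ ∃ a b : V, e = s(a, b) ∧ ¬ ReachE (F \ {e}) a b

lemma ReachE.mono {F F' : Set (Sym2 V)} (h : F ⊆ F') {a b : V} (hr : ReachE F a b) :
    ReachE F' a b :=
  Relation.ReflTransGen.mono (fun _ _ hxy => h hxy) _ _ hr

lemma ReachE.symm {F : Set (Sym2 V)} {a b : V} (hr : ReachE F a b) : ReachE F b a :=
  by
    unfold ReachE at *
    induction hr with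
    | refl => exact .refl
    | tail _ hxy ih => exact Relation.ReflTransGen.head (by rwa [Sym2.eq_swap]) ih

lemma ReachE.trans {F : Set (Sym2 V)} {a b c : V} (h1 : ReachE F a b)
    (h2 : ReachE F b c) : ReachE F a c :=
  Relation.ReflTransGen.trans h1 h2

lemma ReachE.single {F : Set (Sym2 V)} {a b : V} (h : s(a, b) ∈ F) : ReachE F a b :=
  Relation.ReflTransGen.single h

lemma reach_avoid {F : Set (Sym2 V)} (a b : V) {x y : V} (h : ReachE F x y) :
    ReachE (F \ {s(a,b)}) x y ∨ ReachE (F \ {s(a,b)}) x a ∨ ReachE (F \ {s(a,b)}) x b := by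
  induction h with
  | refl => exact Or.inl .refl
  | @tail c d h' step ih =>
    rcases ih with ih | ih
    · by_cases hcd : s(c,d) = s(a,b)
      · rcases Sym2.eq_iff.mp hcd with ⟨rfl, rfl⟩ | ⟨rfl, rfl⟩
        · exact Or.inr (Or.inl ih)
        · exact Or.inr (Or.inr ih)
      · exact Or.inl (Relation.ReflTransGen.tail ih ⟨step, hcd⟩)
    · exact Or.inr ih

lemma reach_detour {F : Set (Sym2 V)} {a b : V} (hd : ReachE (F \ {s(a,b)}) a b)
    {x y : V} (h : ReachE F x y) : ReachE (F \ {s(a,b)}) x y := by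
  induction h with
  | refl => exact .refl
  | @tail c d h' step ih =>
    by_cases hcd : s(c,d) = s(a,b)
    · rcases Sym2.eq_iff.mp hcd with ⟨rfl, rfl⟩ | ⟨rfl, rfl⟩
      · exact ih.trans hd
      · exact ih.trans hd.symm
    · exact Relation.ReflTransGen.tail ih ⟨step, hcd⟩

lemma reach_in_component {H C : Set (Sym2 V)} (hC : IsComponent H C) (e₀ : Sym2 V)
    {a b : V} (ha : a ∈ eSupport C) (h : ReachE (H \ {e₀}) a b) :
    ReachE (C \ {e₀}) a b ∧ b ∈ eSupport C := by
  induction h with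
  | refl => exact ⟨.refl, ha⟩
  | @tail c d h' step ih =>
    obtain ⟨ihr, hc⟩ := ih
    have hCcd : s(c,d) ∈ C := by
      by_contra hnot
      exact hC.2.2.2 _ step.1 hnot c (Sym2.mem_mk_left c d) hc
    exact ⟨Relation.ReflTransGen.tail ihr ⟨hCcd, step.2⟩, ⟨_, hCcd, Sym2.mem_mk_right c d⟩⟩

/-- Bridge covering.  Let `G` be a 2-edge-connected graph, `H` a 2-edge cover of `G`
with a complex component `C`, and let `P` be a bridge-covering path for `C`: a path in
the contracted multigraph `G_C` (obtained by contracting each block of `C` and each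
other component of `H`) avoiding the edges of the bridge tree `T_C`, with two distinct
endpoints in `T_C` and all internal vertices outside `T_C`.  Concretely, `P` consists
of the edges `g 0, ..., g (n-1)` of `G \ H`, where `g j = s(xout j, xin (j+1))`,
the path starts at `xin 0 = xout 0 ∈ V(C)`, ends at `xin n = xout n ∈ V(C)`, and each
intermediate stop enters at `xin j` and leaves at `xout j`, both lying outside `C` and
in a common component of `H` other than `C`; the two endpoints lie in distinct nodes
of `T_C`, i.e. some bridge of `C` separates them.  Then `H' = H ∪ P` is a 2-edge cover
of `G` with strictly fewer bridges than `H`; specifically, every bridge of `H` on the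
path in `T_C` between the two endpoints (i.e. separating them in `C`) is not a bridge
of `H'`, and every bridge of `H'` is a bridge of `H`. -/

theorem bridge_covering_path [Fintype V] (G : SimpleGraph V)
    (hG : TwoECSS (G.edgeSet : Set (Sym2 V)))
    (H : Set (Sym2 V)) (hHG : H ⊆ G.edgeSet)
    (hcover : ∀ v : V, 2 ≤ {e ∈ H | v ∈ e}.ncard)
    (C : Set (Sym2 V)) (hC : IsComponent H C)
    (hcomplex : ∃ e : Sym2 V, IsBridge C e)
    (n : ℕ) (hn : 1 ≤ n)
    (xin xout : ℕ → V) (g : ℕ → Sym2 V)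
    (hstart : xin 0 = xout 0 ∧ xout 0 ∈ eSupport C)
    (hend : xin n = xout n ∧ xin n ∈ eSupport C)
    (hmid : ∀ j : ℕ, 0 < j → j < n →
      xin j ∉ eSupport C ∧ xout j ∉ eSupport C ∧ ReachE (H \ C) (xin j) (xout j))
    (hg : ∀ j : ℕ, j < n →
      g j = s(xout j, xin (j + 1)) ∧ g j ∈ G.edgeSet ∧ g j ∉ H)
    (hginj : ∀ j : ℕ, j < n → ∀ j' : ℕ, j' < n → g j = g j' → j = j')
    (hdistinct : ∃ e₀ ∈ C, ¬ ReachE (C \ {e₀}) (xout 0) (xin n)) :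
    ∀ P : Set (Sym2 V), P = {e | ∃ j : ℕ, j < n ∧ g j = e} →
      (∀ v : V, 2 ≤ {e ∈ H ∪ P | v ∈ e}.ncard) ∧
      (∀ e : Sym2 V, IsBridge H e → ¬ ReachE (C \ {e}) (xout 0) (xin n) →
        ¬ IsBridge (H ∪ P) e) ∧
      (∀ e : Sym2 V, IsBridge (H ∪ P) e → IsBridge H e) ∧
      {e : Sym2 V | IsBridge (H ∪ P) e}.ncard < {e : Sym2 V | IsBridge H e}.ncard := by
  haveI := Classical.decEq V
  intro P hP
  have hgP : ∀ j : ℕ, j < n → g j ∈ P := fun j hj => by rw [hP]; exact ⟨j, hj, rfl⟩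
  have hPnotH : ∀ e ∈ P, e ∉ H := by
    intro e he
    rw [hP] at he
    obtain ⟨j, hj, rfl⟩ := he
    exact (hg j hj).2.2
  have hconn : ConnSet C := hC.2.2.1
  -- the segment lemma: walking along the path from stop i to stop k
  have hseg : ∀ S : Set (Sym2 V), H \ C ⊆ S →
      ∀ i k : ℕ, i ≤ k → k ≤ n → (∀ m, i ≤ m → m < k → g m ∈ S) →
      ReachE S (xout i) (xout k) := by
    intro S hHC i k hik
    induction k, hik using Nat.le_induction with
    | base => intro _ _; exact Relation.ReflTransGen.refl
    | succ k hk ih =>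
      intro hkn hmem
      have hkn' : k < n := hkn
      have h1 : ReachE S (xout i) (xout k) :=
        ih (Nat.le_of_lt hkn') (fun m hm hmk => hmem m hm (Nat.lt_succ_of_lt hmk))
      have h2 : ReachE S (xout k) (xin (k + 1)) :=
        ReachE.single (by rw [← (hg k hkn').1]; exact hmem k hk (Nat.lt_succ_self k))
      have h3 : ReachE S (xin (k + 1)) (xout (k + 1)) := by
        rcases eq_or_lt_of_le hkn with heq | hlt
        · rw [heq, hend.1]
          exact Relation.ReflTransGen.refl
        · exact ((hmid (k + 1) (Nat.succ_pos k) hlt).2.2).mono hHC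
      exact (h1.trans h2).trans h3
  -- part 2
  have part2 : ∀ e : Sym2 V, IsBridge H e → ¬ ReachE (C \ {e}) (xout 0) (xin n) →
      ¬ IsBridge (H ∪ P) e := by
    rintro e hbr hne ⟨heHP, a, b, rfl, hnr⟩
    have heC : s(a, b) ∈ C := by
      by_contra hnot
      apply hne
      rw [Set.diff_singleton_eq_self hnot]
      exact hconn _ hstart.2 _ hend.2
    -- the path avoids e
    have hHCS : H \ C ⊆ (H ∪ P) \ {s(a, b)} := by
      intro f hf
      refine ⟨Or.inl hf.1, fun hfe => hf.2 ?_⟩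
      rw [Set.mem_singleton_iff] at hfe
      rw [hfe]; exact heC
    have hpath : ReachE ((H ∪ P) \ {s(a, b)}) (xout 0) (xout n) := by
      refine hseg _ hHCS 0 n (Nat.zero_le n) le_rfl ?_
      intro m _ hm
      refine ⟨Or.inr (hgP m hm), fun hmem => ?_⟩
      rw [Set.mem_singleton_iff] at hmem
      exact (hg m hm).2.2 (hmem ▸ hC.2.1 heC)
    -- endpoints disconnected in C \ {e}
    obtain ⟨heH, a0, b0, hab0, hnr0⟩ := hbr
    have hnab : ¬ ReachE (C \ {s(a, b)}) a b := by
      intro hr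
      have hr' : ReachE (H \ {s(a, b)}) a b :=
        hr.mono (Set.diff_subset_diff_left hC.2.1)
      rcases Sym2.eq_iff.mp hab0 with ⟨rfl, rfl⟩ | ⟨rfl, rfl⟩
      · exact hnr0 hr'
      · exact hnr0 hr'.symm
    have haC : a ∈ eSupport C := ⟨s(a, b), heC, Sym2.mem_mk_left a b⟩
    have hbC : b ∈ eSupport C := ⟨s(a, b), heC, Sym2.mem_mk_right a b⟩
    have hCS : C \ {s(a, b)} ⊆ (H ∪ P) \ {s(a, b)} :=
      Set.diff_subset_diff_left (hC.2.1.trans Set.subset_union_left)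
    have hA : ReachE (C \ {s(a, b)}) (xout 0) a ∨ ReachE (C \ {s(a, b)}) (xout 0) b := by
      rcases reach_avoid a b (hconn _ hstart.2 _ haC) with h | h | h
      · exact Or.inl h
      · exact Or.inl h
      · exact Or.inr h
    have hB : ReachE (C \ {s(a, b)}) (xin n) a ∨ ReachE (C \ {s(a, b)}) (xin n) b := by
      rcases reach_avoid a b (hconn _ hend.2 _ haC) with h | h | h
      · exact Or.inl h
      · exact Or.inl h
      · exact Or.inr h
    have hpath' : ReachE ((H ∪ P) \ {s(a, b)}) (xout 0) (xin n) := by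
      rw [hend.1]; exact hpath
    rcases hA with hA | hA <;> rcases hB with hB | hB
    · exact hne (hA.trans hB.symm)
    · exact hnr (((hA.mono hCS).symm.trans hpath').trans (hB.mono hCS))
    · exact hnr (((hB.mono hCS).symm.trans hpath'.symm).trans (hA.mono hCS))
    · exact hne (hA.trans hB.symm)
  -- part 3
  have part3 : ∀ e : Sym2 V, IsBridge (H ∪ P) e → IsBridge H e := by
    rintro e ⟨heHP, a, b, hab, hnr⟩
    rcases heHP with heH | heP
    · exact ⟨heH, a, b, hab,
        fun hr => hnr (hr.mono (Set.diff_subset_diff_left Set.subset_union_left))⟩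
    · exfalso
      rw [hP] at heP
      obtain ⟨j, hj, hgj⟩ := heP
      set S := (H ∪ P) \ {e} with hS
      have hgmemS : ∀ m, m < n → m ≠ j → g m ∈ S := by
        intro m hm hne'
        refine ⟨Or.inr (hgP m hm), fun hmem => hne' ?_⟩
        rw [Set.mem_singleton_iff] at hmem
        exact hginj m hm j hj (hmem.trans hgj.symm)
      have hHCsub : H \ C ⊆ S := by
        intro f hf
        refine ⟨Or.inl hf.1, fun hmem => ?_⟩
        rw [Set.mem_singleton_iff] at hmem
        exact (hg j hj).2.2 ((hmem.trans hgj.symm) ▸ hf.1)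
      have hCsub : C ⊆ S := by
        intro f hf
        refine ⟨Or.inl (hC.2.1 hf), fun hmem => ?_⟩
        rw [Set.mem_singleton_iff] at hmem
        exact (hg j hj).2.2 ((hmem.trans hgj.symm) ▸ hC.2.1 hf)
      have h1 : ReachE S (xout 0) (xout j) :=
        hseg S hHCsub 0 j (Nat.zero_le j) (Nat.le_of_lt hj)
          (fun m _ hmj => hgmemS m (lt_trans hmj hj) (Nat.ne_of_lt hmj))
      have h2 : ReachE S (xout (j + 1)) (xout n) :=
        hseg S hHCsub (j + 1) n hj le_rfl
          (fun m hm hmn => hgmemS m hmn (Nat.ne_of_gt hm))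
      have h3 : ReachE S (xin (j + 1)) (xout (j + 1)) := by
        rcases eq_or_lt_of_le (Nat.succ_le_of_lt hj) with heq | hlt
        · have heq' : j + 1 = n := heq
          rw [heq', hend.1]
          exact Relation.ReflTransGen.refl
        · exact ((hmid (j + 1) (Nat.succ_pos j) hlt).2.2).mono hHCsub
      have h4 : ReachE S (xout 0) (xin n) := (hconn _ hstart.2 _ hend.2).mono hCsub
      have h5 : ReachE S (xin n) (xout (j + 1)) := by
        rw [hend.1]; exact h2.symm
      have hfin : ReachE S (xout j) (xin (j + 1)) :=
        ((h1.symm.trans h4).trans h5).trans h3.symm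
      have hout : s(xout j, xin (j + 1)) = s(a, b) := by
        rw [← (hg j hj).1, hgj, hab]
      rcases Sym2.eq_iff.mp hout with ⟨ha', hb'⟩ | ⟨ha', hb'⟩
      · exact hnr (ha' ▸ hb' ▸ hfin)
      · exact hnr (ha' ▸ hb' ▸ hfin.symm)
  -- part 4 witness
  obtain ⟨e₀, he₀C, hne₀⟩ := hdistinct
  obtain ⟨a, b, hab⟩ : ∃ a b : V, e₀ = s(a, b) := by
    induction e₀ using Sym2.ind with
    | _ x y => exact ⟨x, y, rfl⟩
  subst hab
  have haC : a ∈ eSupport C := ⟨s(a, b), he₀C, Sym2.mem_mk_left a b⟩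
  have hbrH : IsBridge H s(a, b) := by
    refine ⟨hC.2.1 he₀C, a, b, rfl, fun hr => ?_⟩
    have h1 := reach_in_component hC s(a, b) haC hr
    exact hne₀ (reach_detour h1.1 (hconn _ hstart.2 _ hend.2))
  have hnotbr : ¬ IsBridge (H ∪ P) s(a, b) := part2 _ hbrH hne₀
  refine ⟨?_, part2, part3, ?_⟩
  · intro v
    refine le_trans (hcover v) (Set.ncard_le_ncard ?_ (Set.toFinite _))
    exact fun f hf => ⟨Or.inl hf.1, hf.2⟩
  · refine Set.ncard_lt_ncard ?_ (Set.toFinite _)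
    refine Set.ssubset_iff_subset_ne.mpr ⟨fun e he => part3 e he, fun h => hnotbr ?_⟩
    show s(a, b) ∈ {e : Sym2 V | IsBridge (H ∪ P) e}
    rw [h]
    exact hbrH
end
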